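/- arXiv:1109.0331 — 3 statements merged into one kernel-verified Lean document; each statement's English description precedes it below -/
import Mathlib

section
/- Let d be an even positive integer. Then in the polynomial ring ℤ[t] one has the identity 4d · Σ_{i=0}^{d} N(d,i) · t^{2(d−i)} = d·(1+t²)²·(1+t⁴)^{(d−2)/2} + d·(1+t⁴)^{d/2} + 2·Σ_{k ∣ d} φ(d/k)·(1+t^{2d/k})^{k}. (This is the combinatorial content of the paper's closed formula for the Poincaré polynomial of Q̄₁(G(1,1),d) in the even case: the Poincaré polynomial equals Σ_{j=1}^{d} t^{2j} + Σ_{i=1}^{d} N(d,i) t^{2(d−i)}.) -/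
open Polynomial

/-- Two `i`-element subsets of `ZMod d` are related if some rotation `x ↦ x + a` or
reflection `x ↦ a - x` of `ZMod d` carries one onto the other.  Since these maps form a
group (the dihedral group of order `2d`), this is the orbit relation of the dihedral
action. -/
def neckRel (d i : ℕ) (S T : {S : Finset (ZMod d) // S.card = i}) : Prop :=
  ∃ a : ZMod d, (S.1.image fun x => x + a) = T.1 ∨ (S.1.image fun x => a - x) = T.1

/-- `neck d i = N(d,i)`: the number of necklaces of `i` black and `d - i` white beads,
i.e. the number of orbits of the dihedral group of order `2d` on `i`-element subsets of
`ZMod d`. -/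
noncomputable def neck (d i : ℕ) : ℕ := Nat.card (Quot (neckRel d i))

namespace NeckallAux

open Finset MulAction DihedralGroup

/-! ### A weighted fixed-point (generating function) lemma -/

section Wfix
variable {α β : Type*} [Fintype α] [DecidableEq α] [DecidableEq β]

omit [Fintype α] in
lemma fixed_iterate {σ : α → α} {S : Finset α} (hS : S.image σ = S) {s : α} (hs : s ∈ S) (n : ℕ) :
    σ^[n] s ∈ S := by
  induction n with
  | zero => exact hs
  | succ n ih =>
    rw [Function.iterate_succ_apply', ← hS]
    exact Finset.mem_image_of_mem σ ih

lemma wfix (σ : α → α) (hσ : Function.Injective σ) (π : α → β)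
    (h1 : ∀ x, π (σ x) = π x)
    (h2 : ∀ x y, π x = π y → ∃ n : ℕ, σ^[n] x = y) (c : ℕ) :
    ∑ S ∈ univ.filter (fun S : Finset α => S.image σ = S),
        ((X : Polynomial ℤ)) ^ (c * (Fintype.card α - S.card))
      = ∏ b ∈ univ.image π, (1 + X ^ (c * (univ.filter (fun x => π x = b)).card)) := by
  classical
  have key : ∀ S : Finset α, S.image σ = S → ∀ b ∈ S.image π,
      univ.filter (fun x => π x = b) = S.filter (fun x => π x = b) := by
    intro S hS b hb
    obtain ⟨s, hs, rfl⟩ := Finset.mem_image.mp hb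
    ext x
    simp only [Finset.mem_filter, Finset.mem_univ, true_and]
    constructor
    · intro hpi
      obtain ⟨n, hn⟩ := h2 s x hpi.symm
      exact ⟨hn ▸ fixed_iterate hS hs n, hpi⟩
    · exact fun h => h.2
  rw [Finset.prod_add]
  rw [Finset.sum_nbij' (i := fun S => S.image π)
    (j := fun T => univ.filter (fun x => π x ∈ T)) ?hi ?hj ?hji ?hij ?hw]
  case hi =>
    intro S hS
    exact Finset.mem_powerset.mpr (Finset.image_subset_image (Finset.subset_univ S))
  case hj =>
    intro T hT
    simp only [Finset.mem_filter, Finset.mem_univ, true_and]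
    apply Finset.eq_of_subset_of_card_le
    · intro y hy
      simp only [Finset.mem_image, Finset.mem_filter, Finset.mem_univ, true_and] at hy ⊢
      obtain ⟨x, hx, rfl⟩ := hy
      rw [h1]; exact hx
    · exact le_of_eq (Finset.card_image_of_injective _ hσ).symm
  case hji =>
    intro S hS
    simp only [Finset.mem_filter, Finset.mem_univ, true_and] at hS
    ext x
    simp only [Finset.mem_filter, Finset.mem_univ, true_and, Finset.mem_image]
    constructor
    · rintro ⟨s, hs, hpi⟩
      obtain ⟨n, rfl⟩ := h2 s x hpi
      exact fixed_iterate hS hs n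
    · intro hx; exact ⟨x, hx, rfl⟩
  case hij =>
    intro T hT
    simp only [Finset.mem_powerset] at hT
    ext b
    simp only [Finset.mem_image, Finset.mem_filter, Finset.mem_univ, true_and]
    constructor
    · rintro ⟨x, hx, rfl⟩; exact hx
    · intro hb
      obtain ⟨x, -, rfl⟩ := Finset.mem_image.mp (hT hb)
      exact ⟨x, hb, rfl⟩
  case hw =>
    intro S hS
    simp only [Finset.mem_filter, Finset.mem_univ, true_and] at hS
    rw [Finset.prod_const_one, one_mul, Finset.prod_pow_eq_pow_sum]
    have hB : ∑ b ∈ univ.image π, (univ.filter (fun x => π x = b)).card = Fintype.card α := by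
      rw [← Finset.card_univ]
      exact (Finset.card_eq_sum_card_fiberwise
        (fun x _ => Finset.mem_image_of_mem π (Finset.mem_univ x))).symm
    have hT : ∑ b ∈ S.image π, (univ.filter (fun x => π x = b)).card = S.card := by
      rw [Finset.sum_congr rfl (fun b hb => congrArg Finset.card (key S hS b hb))]
      exact (Finset.card_eq_sum_card_fiberwise (fun x hx => Finset.mem_image_of_mem π hx)).symm
    have hsub : S.image π ⊆ univ.image π := Finset.image_subset_image (Finset.subset_univ S)
    have hsd := Finset.sum_sdiff (f := fun b => (univ.filter (fun x => π x = b)).card) hsub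
    congr 1
    rw [← Finset.mul_sum]
    have heq : (∑ i ∈ univ.image π \ S.image π, (univ.filter (fun x => π x = i)).card)
        + S.card = Fintype.card α := by
      rw [← hT, ← hB]; exact hsd
    rw [← heq, Nat.add_sub_cancel]
end Wfix

/-! ### The dihedral action on `ZMod d` and on subsets -/

section Act
variable {d : ℕ}

def dsmul : DihedralGroup d → ZMod d → ZMod d
  | .r a, x => x - a
  | .sr a, x => a - x

instance : SMul (DihedralGroup d) (ZMod d) := ⟨dsmul⟩

@[simp] lemma r_smul (a x : ZMod d) : (r a) • x = x - a := rfl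
@[simp] lemma sr_smul (a x : ZMod d) : (sr a) • x = a - x := rfl

instance : MulAction (DihedralGroup d) (ZMod d) where
  one_smul x := by rw [one_def, r_smul, sub_zero]
  mul_smul := by rintro (a | a) (b | b) x <;> simp <;> ring

instance (i : ℕ) : SMul (DihedralGroup d) {S : Finset (ZMod d) // S.card = i} :=
  ⟨fun g S => ⟨S.1.image (fun x => g • x), by
    rw [Finset.card_image_of_injective _ (MulAction.injective g), S.2]⟩⟩

@[simp] lemma smul_coe {i : ℕ} (g : DihedralGroup d) (S : {S : Finset (ZMod d) // S.card = i}) :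
    (g • S).1 = S.1.image (fun x => g • x) := rfl

instance (i : ℕ) : MulAction (DihedralGroup d) {S : Finset (ZMod d) // S.card = i} where
  one_smul S := Subtype.ext (by simp)
  mul_smul g h S := Subtype.ext (by
    simp only [smul_coe, Finset.image_image]
    exact Finset.image_congr (fun x _ => mul_smul g h x))

lemma neckRel_iff {i : ℕ} (S T : {S : Finset (ZMod d) // S.card = i}) :
    _root_.neckRel d i S T ↔ ∃ g : DihedralGroup d, g • S = T := by
  constructor
  · rintro ⟨a, h | h⟩
    · exact ⟨r (-a), Subtype.ext (by
        simpa only [smul_coe, r_smul, sub_neg_eq_add] using h)⟩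
    · exact ⟨sr a, Subtype.ext (by simpa only [smul_coe, sr_smul] using h)⟩
  · rintro ⟨(a | a), rfl⟩
    · exact ⟨-a, Or.inl (by simp [sub_eq_add_neg])⟩
    · exact ⟨a, Or.inr rfl⟩

lemma neck_eq [NeZero d] (i : ℕ) :
    neck d i
      = Nat.card (Quotient (orbitRel (DihedralGroup d) {S : Finset (ZMod d) // S.card = i})) := by
  apply Nat.card_congr
  apply Quot.congr (Equiv.refl _)
  intro a b
  rw [neckRel_iff]
  show _ ↔ orbitRel (DihedralGroup d) _ a b
  rw [orbitRel_apply, mem_orbit_iff]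
  constructor
  · rintro ⟨g, rfl⟩; exact ⟨g⁻¹, inv_smul_smul g a⟩
  · rintro ⟨g, rfl⟩; exact ⟨g⁻¹, inv_smul_smul g b⟩

lemma burnside_i [NeZero d] (i : ℕ) :
    ∑ g : DihedralGroup d, ((univ.filter (fun S : Finset (ZMod d) =>
        S.image (fun x => g • x) = S ∧ S.card = i)).card : ℕ)
      = neck d i * (2 * d) := by
  classical
  haveI : Fintype (Quotient (orbitRel (DihedralGroup d) {S : Finset (ZMod d) // S.card = i})) :=
    Fintype.ofFinite _
  have hb := MulAction.sum_card_fixedBy_eq_card_orbits_mul_card_group (DihedralGroup d)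
    {S : Finset (ZMod d) // S.card = i}
  rw [DihedralGroup.card] at hb
  have hcard : ∀ g : DihedralGroup d,
      Fintype.card (fixedBy {S : Finset (ZMod d) // S.card = i} g)
        = (univ.filter (fun S : Finset (ZMod d) =>
            S.image (fun x => g • x) = S ∧ S.card = i)).card := by
    intro g
    rw [← Fintype.card_subtype]
    apply Fintype.card_congr
    exact {
      toFun := fun x => ⟨x.1.1, congrArg Subtype.val x.2, x.1.2⟩
      invFun := fun S => ⟨⟨S.1, S.2.2⟩, Subtype.ext S.2.1⟩
      left_inv := fun x => rfl
      right_inv := fun S => rfl }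
  rw [Finset.sum_congr rfl (fun g _ => hcard g)] at hb
  rw [hb, neck_eq, Nat.card_eq_fintype_card]

/-- group the fixed subsets of `g` by their cardinality -/
lemma fiber_card [NeZero d] (g : DihedralGroup d) :
    ∑ i ∈ Finset.range (d + 1),
        (((univ.filter (fun S : Finset (ZMod d) =>
          S.image (fun x => g • x) = S ∧ S.card = i)).card : ℕ) : Polynomial ℤ) * X ^ (2 * (d - i))
      = ∑ S ∈ univ.filter (fun S : Finset (ZMod d) => S.image (fun x => g • x) = S),
          (X : Polynomial ℤ) ^ (2 * (d - S.card)) := by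
  classical
  have hmaps : ∀ S : Finset (ZMod d),
      S ∈ univ.filter (fun S : Finset (ZMod d) => S.image (fun x => g • x) = S) →
      S.card ∈ Finset.range (d + 1) := by
    intro S _
    rw [Finset.mem_range]
    have := Finset.card_le_univ S
    rw [ZMod.card] at this
    omega
  rw [← Finset.sum_fiberwise_of_maps_to hmaps (fun S : Finset (ZMod d) =>
      (X : Polynomial ℤ) ^ (2 * (d - S.card)))]
  refine Finset.sum_congr rfl (fun i _ => ?_)
  rw [Finset.filter_filter]
  rw [Finset.sum_congr rfl (fun S hS => by
    rw [(Finset.mem_filter.mp hS).2.2]), Finset.sum_const, nsmul_eq_mul]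

def dEquiv : ZMod d ⊕ ZMod d ≃ DihedralGroup d where
  toFun := Sum.elim r sr
  invFun g := match g with
    | .r a => Sum.inl a
    | .sr a => Sum.inr a
  left_inv := by rintro (a | a) <;> rfl
  right_inv := by rintro (a | a) <;> rfl

end Act

/-! ### Rotations -/

section Rot
variable {d : ℕ}

lemma iterate_sub (a x : ZMod d) (n : ℕ) : (fun y => y - a)^[n] x = x - n • a := by
  induction n with
  | zero => simp
  | succ n ih =>
    rw [Function.iterate_succ_apply', ih, succ_nsmul, sub_sub]

lemma rot_poly [NeZero d] (a : ZMod d) :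
    ∑ S ∈ univ.filter (fun S : Finset (ZMod d) => S.image (fun x => x - a) = S),
        (X : Polynomial ℤ) ^ (2 * (d - S.card))
      = (1 + X ^ (2 * addOrderOf a)) ^ (d / addOrderOf a) := by
  classical
  have ho : 0 < addOrderOf a := addOrderOf_pos a
  have hcard : (Fintype.card (ZMod d)) = d := ZMod.card d
  have h1 : ∀ x : ZMod d, (QuotientAddGroup.mk (x - a) :
      ZMod d ⧸ AddSubgroup.zmultiples a) = QuotientAddGroup.mk x := by
    intro x
    rw [QuotientAddGroup.eq]
    have : -(x - a) + x = a := by ring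
    rw [this]
    exact AddSubgroup.mem_zmultiples a
  have h2 : ∀ x y : ZMod d, (QuotientAddGroup.mk x :
      ZMod d ⧸ AddSubgroup.zmultiples a) = QuotientAddGroup.mk y →
      ∃ n : ℕ, (fun y => y - a)^[n] x = y := by
    intro x y hxy
    rw [QuotientAddGroup.eq] at hxy
    obtain ⟨k, hk⟩ := AddSubgroup.mem_zmultiples_iff.mp hxy
    refine ⟨((-k) % (addOrderOf a : ℤ)).toNat, ?_⟩
    rw [iterate_sub]
    have hnn : (0 : ℤ) ≤ (-k) % (addOrderOf a : ℤ) :=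
      Int.emod_nonneg _ (by exact_mod_cast ho.ne')
    have hsm : ((((-k) % (addOrderOf a : ℤ)).toNat : ℕ) • a : ZMod d) = (-k) • a := by
      rw [← natCast_zsmul, Int.toNat_of_nonneg hnn]
      have hdvd : (addOrderOf a : ℤ) ∣ ((-k) % (addOrderOf a : ℤ) - (-k)) := by
        rw [Int.emod_def]
        exact ⟨-((-k) / (addOrderOf a : ℤ)), by ring⟩
      have hz : ((-k) % (addOrderOf a : ℤ) - (-k)) • a = 0 :=
        addOrderOf_dvd_iff_zsmul_eq_zero.mp (by exact_mod_cast hdvd)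
      have h3 := hz
      rw [sub_zsmul] at h3
      rw [← sub_eq_zero]
      rw [sub_eq_add_neg]
      exact h3
    rw [hsm, neg_zsmul, sub_neg_eq_add, hk]
    ring
  have key := wfix (fun x : ZMod d => x - a) sub_left_injective
    (fun x => (QuotientAddGroup.mk x : ZMod d ⧸ AddSubgroup.zmultiples a)) h1 h2 2
  rw [hcard] at key
  rw [key]
  have hfib : ∀ b : ZMod d ⧸ AddSubgroup.zmultiples a,
      (univ.filter (fun x : ZMod d => (QuotientAddGroup.mk x :
        ZMod d ⧸ AddSubgroup.zmultiples a) = b)).card = addOrderOf a := by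
    intro b
    have e1 : {x : ZMod d // (QuotientAddGroup.mk x :
        ZMod d ⧸ AddSubgroup.zmultiples a) = b} ≃
        (QuotientAddGroup.mk ⁻¹' ({b} : Set (ZMod d ⧸ AddSubgroup.zmultiples a))) :=
      Equiv.cast rfl
    rw [← Fintype.card_subtype, ← Nat.card_eq_fintype_card, Nat.card_congr e1,
      Nat.card_congr (QuotientAddGroup.preimageMkEquivAddSubgroupProdSet
        (AddSubgroup.zmultiples a) {b}), Nat.card_prod, Nat.card_zmultiples,
      Nat.card_unique, mul_one]
  have himg : (univ.image (fun x : ZMod d => (QuotientAddGroup.mk x :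
      ZMod d ⧸ AddSubgroup.zmultiples a))) = univ := by
    apply Finset.image_univ_of_surjective
    exact QuotientAddGroup.mk_surjective
  rw [himg, Finset.prod_congr rfl (fun b _ => by rw [hfib b]), Finset.prod_const]
  congr 1
  have hq := AddSubgroup.card_eq_card_quotient_mul_card_addSubgroup
    (AddSubgroup.zmultiples a)
  rw [Nat.card_zmultiples, Nat.card_zmod] at hq
  rw [Finset.card_univ, ← Nat.card_eq_fintype_card]
  exact (Nat.div_eq_of_eq_mul_left ho hq).symm

lemma rot_sum {d : ℕ} [NeZero d] :
    ∑ a : ZMod d, ((1 + X ^ (2 * addOrderOf a)) ^ (d / addOrderOf a) : Polynomial ℤ)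
      = ∑ k ∈ d.divisors, (Nat.totient (d / k) : Polynomial ℤ) * (1 + X ^ (2 * (d / k))) ^ k := by
  classical
  have hd0 : d ≠ 0 := NeZero.ne d
  have hmaps : ∀ a : ZMod d, a ∈ (univ : Finset (ZMod d)) → addOrderOf a ∈ d.divisors := by
    intro a _
    rw [Nat.mem_divisors]
    refine ⟨?_, hd0⟩
    have := addOrderOf_dvd_card (x := a)
    rwa [ZMod.card] at this
  rw [← Finset.sum_fiberwise_of_maps_to hmaps
    (fun a : ZMod d => ((1 + X ^ (2 * addOrderOf a)) ^ (d / addOrderOf a) : Polynomial ℤ))]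
  have hstep : ∀ m ∈ d.divisors,
      ∑ a ∈ univ.filter (fun a : ZMod d => addOrderOf a = m),
          ((1 + X ^ (2 * addOrderOf a)) ^ (d / addOrderOf a) : Polynomial ℤ)
        = (Nat.totient m : Polynomial ℤ) * (1 + X ^ (2 * m)) ^ (d / m) := by
    intro m hm
    rw [Finset.sum_congr rfl (fun a ha => by rw [(Finset.mem_filter.mp ha).2]),
      Finset.sum_const, nsmul_eq_mul]
    congr 2
    have hdvd : m ∣ Fintype.card (ZMod d) := by
      rw [ZMod.card]; exact (Nat.mem_divisors.mp hm).1
    exact_mod_cast IsAddCyclic.card_addOrderOf_eq_totient (α := ZMod d) hdvd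
  rw [Finset.sum_congr rfl hstep]
  have := (Nat.sum_div_divisors d
    (fun m => (Nat.totient m : Polynomial ℤ) * (1 + X ^ (2 * m)) ^ (d / m))).symm
  rw [this]
  refine Finset.sum_congr rfl (fun k hk => ?_)
  rw [Nat.div_div_self (Nat.mem_divisors.mp hk).1 hd0]

end Rot

/-! ### Reflections -/

section Refl
variable {d : ℕ}

lemma kernel_two [NeZero d] (heven : Even d) (z : ZMod d) :
    z + z = 0 ↔ z = 0 ∨ z = ((d / 2 : ℕ) : ZMod d) := by
  obtain ⟨e, he⟩ := heven
  have hd0 : 0 < d := Nat.pos_of_ne_zero (NeZero.ne d)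
  constructor
  · intro h
    have hv : (z.val + z.val) % d = 0 := by
      have := congrArg ZMod.val h
      rwa [ZMod.val_add, ZMod.val_zero] at this
    have hlt : z.val < d := ZMod.val_lt z
    obtain ⟨q, hq⟩ := (Nat.dvd_of_mod_eq_zero hv)
    rcases q with _ | _ | q
    · left
      have : z.val = 0 := by omega
      have := congrArg (fun n : ℕ => (n : ZMod d)) this
      simpa [ZMod.natCast_rightInverse z] using this
    · right
      have hz2 : z.val = d / 2 := by omega
      have := congrArg (fun n : ℕ => (n : ZMod d)) hz2
      simpa [ZMod.natCast_rightInverse z] using this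
    · exfalso
      have ht : z.val + z.val = d * q + 2 * d := by rw [hq]; ring
      have : 0 ≤ d * q := Nat.zero_le _
      omega
  · rintro (rfl | rfl)
    · simp
    · rw [← Nat.cast_add]
      have : d / 2 + d / 2 = d := by omega
      rw [this, ZMod.natCast_self]

lemma sol_card [NeZero d] (heven : Even d) (c : ZMod d) :
    (univ.filter (fun x : ZMod d => c - x = x)).card = if Even c.val then 2 else 0 := by
  classical
  obtain ⟨e, he⟩ := heven
  have hd0 : 0 < d := Nat.pos_of_ne_zero (NeZero.ne d)
  have hiff : ∀ x : ZMod d, (c - x = x) ↔ (x + x = c) := by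
    intro x
    rw [sub_eq_iff_eq_add, eq_comm]
  split_ifs with hc
  · set b : ZMod d := ((c.val / 2 : ℕ) : ZMod d) with hbdef
    have hb : b + b = c := by
      rw [← Nat.cast_add]
      have : c.val / 2 + c.val / 2 = c.val := by
        obtain ⟨f, hf⟩ := hc; omega
      rw [this, ZMod.natCast_rightInverse c]
    set m : ZMod d := ((d / 2 : ℕ) : ZMod d) with hmdef
    have hm0 : m ≠ 0 := by
      rw [hmdef, Ne, ZMod.natCast_eq_zero_iff]
      intro h
      have := Nat.le_of_dvd (by omega) h
      omega
    have hfil : univ.filter (fun x : ZMod d => c - x = x) = {b, b + m} := by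
      ext x
      simp only [Finset.mem_filter, Finset.mem_univ, true_and, Finset.mem_insert,
        Finset.mem_singleton]
      rw [hiff]
      constructor
      · intro h
        have hz : (x - b) + (x - b) = 0 := by
          have : (x - b) + (x - b) = (x + x) - (b + b) := by ring
          rw [this, h, hb, sub_self]
        rcases (kernel_two ⟨e, he⟩ (x - b)).mp hz with h0 | hm
        · left; rwa [sub_eq_zero] at h0
        · right
          rw [sub_eq_iff_eq_add] at hm
          rw [hm, ← hmdef]; ring
      · rintro (rfl | rfl)
        · exact hb
        · have h2 : m + m = 0 := by
            rw [hmdef, ← Nat.cast_add]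
            have : d / 2 + d / 2 = d := by omega
            rw [this, ZMod.natCast_self]
          calc b + m + (b + m) = (b + b) + (m + m) := by ring
            _ = c := by rw [h2, add_zero, hb]
    rw [hfil, Finset.card_pair]
    intro hbm
    exact hm0 (by linear_combination -hbm)
  · rw [Finset.card_eq_zero, Finset.filter_eq_empty_iff]
    intro x _
    rw [hiff]
    intro h
    apply hc
    have hv : (x.val + x.val) % d = c.val := by
      have := congrArg ZMod.val h
      rwa [ZMod.val_add] at this
    have hlt : x.val < d := ZMod.val_lt x
    have hclt : c.val < d := ZMod.val_lt c
    have hdm := Nat.div_add_mod (x.val + x.val) d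
    rw [hv] at hdm
    set q := (x.val + x.val) / d with hqdef
    rcases Nat.lt_or_ge q 2 with hq2 | hq2
    · interval_cases q
      · exact ⟨x.val, by omega⟩
      · exact ⟨x.val - e, by omega⟩
    · exfalso
      have h2d : d * 2 ≤ d * q := Nat.mul_le_mul_left d hq2
      generalize hgen : d * q = t at hdm h2d
      omega

lemma refl_poly [NeZero d] (heven : Even d) (c : ZMod d) :
    ∑ S ∈ univ.filter (fun S : Finset (ZMod d) => S.image (fun x => c - x) = S),
        (X : Polynomial ℤ) ^ (2 * (d - S.card))
      = if Even c.val then ((1 + X ^ 2) ^ 2 * (1 + X ^ 4) ^ ((d - 2) / 2) : Polynomial ℤ)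
        else (1 + X ^ 4) ^ (d / 2) := by
  classical
  have hd0 : 0 < d := Nat.pos_of_ne_zero (NeZero.ne d)
  set π : ZMod d → Finset (ZMod d) := fun x => {x, c - x} with hπ
  have h1 : ∀ x, π (c - x) = π x := by
    intro x
    simp only [hπ, sub_sub_cancel]
    rw [Finset.pair_comm]
  have h2 : ∀ x y, π x = π y → ∃ n : ℕ, (fun z => c - z)^[n] x = y := by
    intro x y hxy
    have hy : y ∈ π x := by
      rw [hxy]; exact Finset.mem_insert_self y _
    rcases Finset.mem_insert.mp hy with h | h
    · exact ⟨0, h.symm⟩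
    · exact ⟨1, by simpa using (Finset.mem_singleton.mp h).symm⟩
  have mem_imp : ∀ x y : ZMod d, y ∈ π x → π y = π x := by
    intro x y hy
    rcases Finset.mem_insert.mp hy with h | h
    · rw [h]
    · rw [Finset.mem_singleton.mp h, h1]
  have key := wfix (fun x : ZMod d => c - x) sub_right_injective π h1 h2 2
  rw [ZMod.card] at key
  rw [key]
  set B := (univ : Finset (ZMod d)).image π with hB
  have hfib : ∀ b ∈ B, univ.filter (fun x => π x = b) = b := by
    intro b hb
    obtain ⟨x₀, -, rfl⟩ := Finset.mem_image.mp hb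
    ext y
    simp only [Finset.mem_filter, Finset.mem_univ, true_and]
    constructor
    · intro h
      rw [← h]; exact Finset.mem_insert_self y _
    · intro h
      exact mem_imp x₀ y h
  rw [Finset.prod_congr rfl (fun b hb => by rw [hfib b hb])]
  have hcard12 : ∀ b ∈ B, b.card = 1 ∨ b.card = 2 := by
    intro b hb
    obtain ⟨x₀, -, rfl⟩ := Finset.mem_image.mp hb
    by_cases h : c - x₀ = x₀
    · left; rw [hπ]; simp [h]
    · right; exact Finset.card_pair (fun hx => h hx.symm)
  have hdisj : ∀ b ∈ B, ∀ b' ∈ B, b ≠ b' → Disjoint b b' := by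
    intro b hb b' hb' hne
    obtain ⟨x, -, rfl⟩ := Finset.mem_image.mp hb
    obtain ⟨x', -, rfl⟩ := Finset.mem_image.mp hb'
    rw [Finset.disjoint_left]
    intro y hy hy'
    exact hne ((mem_imp x y hy).symm.trans (mem_imp x' y hy'))
  have hcover : (B.biUnion fun b => b) = univ := by
    ext y
    simp only [Finset.mem_biUnion, Finset.mem_univ, iff_true]
    exact ⟨π y, Finset.mem_image_of_mem π (Finset.mem_univ y), Finset.mem_insert_self y _⟩
  have hsum : ∑ b ∈ B, b.card = d := by
    rw [← Finset.card_biUnion hdisj, hcover, Finset.card_univ, ZMod.card]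
  have hB1 : B.filter (fun b => b.card = 1)
      = (univ.filter (fun x : ZMod d => c - x = x)).image (fun x => ({x} : Finset (ZMod d))) := by
    ext b
    simp only [Finset.mem_filter, Finset.mem_image, Finset.mem_univ, true_and]
    constructor
    · rintro ⟨hb, hc1⟩
      obtain ⟨x₀, -, rfl⟩ := Finset.mem_image.mp hb
      have hx : c - x₀ = x₀ := by
        by_contra h
        rw [hπ] at hc1
        simp only at hc1
        rw [Finset.card_pair (fun hx => h hx.symm)] at hc1
        omega
      exact ⟨x₀, hx, by rw [hπ]; simp [hx]⟩
    · rintro ⟨x₀, hx₀, rfl⟩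
      constructor
      · rw [hB]
        apply Finset.mem_image.mpr
        exact ⟨x₀, Finset.mem_univ _, by rw [hπ]; simp [hx₀]⟩
      · exact Finset.card_singleton x₀
  have hn1 : (B.filter (fun b => b.card = 1)).card = if Even c.val then 2 else 0 := by
    rw [hB1, Finset.card_image_of_injective _ (fun x y h => by
      simpa using h), sol_card heven c]
  rw [← Finset.prod_filter_mul_prod_filter_not B (fun b => b.card = 1)]
  have hp1 : ∏ b ∈ B.filter (fun b => b.card = 1), ((1 : Polynomial ℤ) + X ^ (2 * b.card))
      = (1 + X ^ 2) ^ (if Even c.val then 2 else 0) := by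
    rw [Finset.prod_congr rfl (fun b hb => by
      rw [(Finset.mem_filter.mp hb).2]), Finset.prod_const, hn1]
  have hp2 : ∏ b ∈ B.filter (fun b => ¬ b.card = 1), ((1 : Polynomial ℤ) + X ^ (2 * b.card))
      = (1 + X ^ 4) ^ ((B.filter (fun b => ¬ b.card = 1)).card) := by
    rw [Finset.prod_congr rfl (fun b hb => by
      have h2 : b.card = 2 := by
        rcases hcard12 b (Finset.mem_filter.mp hb).1 with h | h
        · exact absurd h (Finset.mem_filter.mp hb).2
        · exact h
      rw [h2]), Finset.prod_const]
  rw [hp1, hp2]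
  have hsplit := Finset.sum_filter_add_sum_filter_not B (fun b => b.card = 1) (fun b => b.card)
  rw [hsum] at hsplit
  have hs1 : ∑ b ∈ B.filter (fun b => b.card = 1), b.card
      = (B.filter (fun b => b.card = 1)).card := by
    rw [Finset.sum_congr rfl (fun b hb => (Finset.mem_filter.mp hb).2), Finset.sum_const,
      smul_eq_mul, mul_one]
  have hs2 : ∑ b ∈ B.filter (fun b => ¬ b.card = 1), b.card
      = 2 * (B.filter (fun b => ¬ b.card = 1)).card := by
    rw [Finset.sum_congr rfl (fun b hb => by
      rcases hcard12 b (Finset.mem_filter.mp hb).1 with h | h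
      · exact absurd h (Finset.mem_filter.mp hb).2
      · exact h), Finset.sum_const, smul_eq_mul, mul_comm]
  rw [hs1, hs2, hn1] at hsplit
  split_ifs with hc
  · rw [if_pos hc] at hsplit
    have : (B.filter (fun b => ¬ b.card = 1)).card = (d - 2) / 2 := by omega
    rw [this]
  · rw [if_neg hc] at hsplit
    have : (B.filter (fun b => ¬ b.card = 1)).card = d / 2 := by omega
    rw [this, pow_zero, one_mul]

lemma even_val_card [NeZero d] (heven : Even d) :
    (univ.filter (fun c : ZMod d => Even c.val)).card = d / 2 := by
  classical
  obtain ⟨e, he⟩ := heven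
  have hd0 : 0 < d := Nat.pos_of_ne_zero (NeZero.ne d)
  rw [← Finset.card_range (d / 2)]
  apply Finset.card_nbij' (i := fun c => c.val / 2) (j := fun i => ((2 * i : ℕ) : ZMod d))
  · intro c hc
    simp only [Finset.mem_coe, Finset.mem_filter, Finset.mem_univ, true_and] at hc
    obtain ⟨f, hf⟩ := hc
    have := ZMod.val_lt c
    simp only [Finset.mem_coe, Finset.mem_range]
    omega
  · intro i hi
    simp only [Finset.mem_coe, Finset.mem_range] at hi
    simp only [Finset.mem_coe, Finset.mem_filter, Finset.mem_univ, true_and]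
    rw [ZMod.val_cast_of_lt (by omega)]
    exact ⟨i, by omega⟩
  · intro c hc
    simp only [Finset.mem_coe, Finset.mem_filter, Finset.mem_univ, true_and] at hc
    obtain ⟨f, hf⟩ := hc
    have h2 : 2 * (c.val / 2) = c.val := by omega
    beta_reduce
    rw [h2]
    exact ZMod.natCast_rightInverse c
  · intro i hi
    simp only [Finset.mem_coe, Finset.mem_range] at hi
    beta_reduce
    rw [ZMod.val_cast_of_lt (by omega)]
    omega

end Refl

end NeckallAux

open Finset NeckallAux in
theorem stmt1 (d : ℕ) (hd : 0 < d) (heven : Even d) :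
    (4 * d : Polynomial ℤ) *
        ∑ i ∈ Finset.range (d + 1), (neck d i : Polynomial ℤ) * X ^ (2 * (d - i))
      = (d : Polynomial ℤ) * (1 + X ^ 2) ^ 2 * (1 + X ^ 4) ^ ((d - 2) / 2)
        + (d : Polynomial ℤ) * (1 + X ^ 4) ^ (d / 2)
        + 2 * ∑ k ∈ d.divisors,
            (Nat.totient (d / k) : Polynomial ℤ) * (1 + X ^ (2 * (d / k))) ^ k := by
  classical
  haveI : NeZero d := ⟨hd.ne'⟩
  have hmain : ((2 * d : ℕ) : Polynomial ℤ) *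
      (∑ i ∈ Finset.range (d + 1), (neck d i : Polynomial ℤ) * X ^ (2 * (d - i)))
      = (∑ a : ZMod d, ((1 + X ^ (2 * addOrderOf a)) ^ (d / addOrderOf a) : Polynomial ℤ))
        + ∑ a : ZMod d, (if Even a.val
            then ((1 + X ^ 2) ^ 2 * (1 + X ^ 4) ^ ((d - 2) / 2) : Polynomial ℤ)
            else (1 + X ^ 4) ^ (d / 2)) := by
    calc ((2 * d : ℕ) : Polynomial ℤ) *
        (∑ i ∈ Finset.range (d + 1), (neck d i : Polynomial ℤ) * X ^ (2 * (d - i)))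
        = ∑ i ∈ Finset.range (d + 1),
            ((neck d i * (2 * d) : ℕ) : Polynomial ℤ) * X ^ (2 * (d - i)) := by
          rw [Finset.mul_sum]
          refine Finset.sum_congr rfl (fun i _ => ?_)
          push_cast
          ring
      _ = ∑ i ∈ Finset.range (d + 1), ∑ g : DihedralGroup d,
            (((univ.filter (fun S : Finset (ZMod d) =>
              S.image (fun x => g • x) = S ∧ S.card = i)).card : ℕ) : Polynomial ℤ)
              * X ^ (2 * (d - i)) := by
          refine Finset.sum_congr rfl (fun i _ => ?_)
          rw [← burnside_i i, Nat.cast_sum, Finset.sum_mul]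
      _ = ∑ g : DihedralGroup d, ∑ i ∈ Finset.range (d + 1),
            (((univ.filter (fun S : Finset (ZMod d) =>
              S.image (fun x => g • x) = S ∧ S.card = i)).card : ℕ) : Polynomial ℤ)
              * X ^ (2 * (d - i)) := Finset.sum_comm
      _ = ∑ g : DihedralGroup d, ∑ S ∈ univ.filter (fun S : Finset (ZMod d) =>
            S.image (fun x => g • x) = S), (X : Polynomial ℤ) ^ (2 * (d - S.card)) :=
          Finset.sum_congr rfl (fun g _ => fiber_card g)
      _ = ∑ x : ZMod d ⊕ ZMod d, ∑ S ∈ univ.filter (fun S : Finset (ZMod d) =>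
            S.image (fun y => dEquiv x • y) = S), (X : Polynomial ℤ) ^ (2 * (d - S.card)) :=
          (Fintype.sum_equiv dEquiv _ _ (fun x => rfl)).symm
      _ = (∑ a : ZMod d, ∑ S ∈ univ.filter (fun S : Finset (ZMod d) =>
            S.image (fun y => DihedralGroup.r a • y) = S),
              (X : Polynomial ℤ) ^ (2 * (d - S.card)))
          + ∑ a : ZMod d, ∑ S ∈ univ.filter (fun S : Finset (ZMod d) =>
            S.image (fun y => DihedralGroup.sr a • y) = S),
              (X : Polynomial ℤ) ^ (2 * (d - S.card)) := Fintype.sum_sum_type _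
      _ = _ := by
          congr 1
          · refine Finset.sum_congr rfl (fun a _ => ?_)
            simp only [r_smul]
            exact rot_poly a
          · refine Finset.sum_congr rfl (fun a _ => ?_)
            simp only [sr_smul]
            exact refl_poly heven a
  rw [rot_sum] at hmain
  have hodd : (univ.filter (fun c : ZMod d => ¬ Even c.val)).card = d / 2 := by
    have h1 := Finset.card_filter_add_card_filter_not (s := (univ : Finset (ZMod d)))
      (p := fun c : ZMod d => Even c.val)
    rw [Finset.card_univ, ZMod.card, even_val_card heven] at h1
    obtain ⟨e, he⟩ := heven
    omega
  have hrefl : (∑ a : ZMod d, (if Even a.val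
        then ((1 + X ^ 2) ^ 2 * (1 + X ^ 4) ^ ((d - 2) / 2) : Polynomial ℤ)
        else (1 + X ^ 4) ^ (d / 2)))
      = ((d / 2 : ℕ) : Polynomial ℤ) * ((1 + X ^ 2) ^ 2 * (1 + X ^ 4) ^ ((d - 2) / 2))
        + ((d / 2 : ℕ) : Polynomial ℤ) * (1 + X ^ 4) ^ (d / 2) := by
    rw [Finset.sum_ite, Finset.sum_const, Finset.sum_const, even_val_card heven, hodd,
      nsmul_eq_mul, nsmul_eq_mul]
  rw [hrefl] at hmain
  have hdd : ((d / 2 : ℕ) : Polynomial ℤ) * 2 = (d : Polynomial ℤ) := by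
    obtain ⟨e, he⟩ := heven
    have h2 : (d / 2) * 2 = d := by omega
    calc ((d / 2 : ℕ) : Polynomial ℤ) * 2 = (((d / 2) * 2 : ℕ) : Polynomial ℤ) := by
          push_cast; ring
      _ = (d : Polynomial ℤ) := by rw [h2]
  push_cast at hmain
  linear_combination (2 : Polynomial ℤ) * hmain
    + ((1 + X ^ 2) ^ 2 * (1 + X ^ 4) ^ ((d - 2) / 2) + (1 + X ^ 4) ^ (d / 2)) * hdd
end

section
/- Let d be a positive integer and define the polynomial P_d(t) := Σ_{j=1}^{d} t^{2j} + Σ_{i=1}^{d} N(d,i) t^{2(d−i)} in ℤ[t] (this is the Poincaré polynomial of Q̄₁(G(1,1),d) computed in the paper). Then P_d is palindromic of degree 2d: for every 0 ≤ m ≤ 2d, the coefficient of t^m in P_d equals the coefficient of t^{2d−m}; moreover the coefficient of t^m vanishes for every odd m. In other words, t^{2d}·P_d(1/t) = P_d(t). -/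
open Polynomial

lemma image_equiv_compl {α : Type*} [Fintype α] [DecidableEq α] (e : α ≃ α) (S : Finset α) :
    (S.image e)ᶜ = Sᶜ.image e := by
  ext x
  simp only [Finset.mem_compl, Finset.mem_image]
  constructor
  · intro h; exact ⟨e.symm x, fun hm => h ⟨_, hm, e.apply_symm_apply x⟩, e.apply_symm_apply x⟩
  · rintro ⟨a, ha, rfl⟩ ⟨b, hb, hba⟩; exact ha (e.injective hba ▸ hb)

lemma neckRel_compl {d : ℕ} [NeZero d] {i j : ℕ} {S T : {S : Finset (ZMod d) // S.card = i}}
    (h : neckRel d i S T) (hS : S.1ᶜ.card = j) (hT : T.1ᶜ.card = j) :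
    neckRel d j ⟨S.1ᶜ, hS⟩ ⟨T.1ᶜ, hT⟩ := by
  obtain ⟨a, h | h⟩ := h
  · refine ⟨a, Or.inl ?_⟩
    have := image_equiv_compl (Equiv.addRight a) S.1
    simp only [← h]
    exact (this).symm
  · refine ⟨a, Or.inr ?_⟩
    have := image_equiv_compl (Equiv.subLeft a) S.1
    simp only [← h]
    exact (this).symm

lemma neck_compl {d : ℕ} (hd : 0 < d) {i : ℕ} (hi : i ≤ d) : neck d i = neck d (d - i) := by
  haveI : NeZero d := ⟨hd.ne'⟩
  have hcard : Fintype.card (ZMod d) = d := ZMod.card d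
  have cc : ∀ (S : {S : Finset (ZMod d) // S.card = i}), S.1ᶜ.card = d - i := fun S => by
    rw [Finset.card_compl, S.2, hcard]
  have cc' : ∀ (S : {S : Finset (ZMod d) // S.card = d - i}), S.1ᶜ.card = i := fun S => by
    rw [Finset.card_compl, S.2, hcard]; omega
  have e : Quot (neckRel d i) ≃ Quot (neckRel d (d - i)) := by
    refine ⟨Quot.map (fun S => ⟨S.1ᶜ, cc S⟩) (fun S T h => neckRel_compl h _ _),
      Quot.map (fun S => ⟨S.1ᶜ, cc' S⟩) (fun S T h => neckRel_compl h _ _), ?_, ?_⟩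
    · intro q; induction q using Quot.ind with
      | _ S => simp [Quot.map]
    · intro q; induction q using Quot.ind with
      | _ S => simp [Quot.map]
  exact Nat.card_congr e

lemma neck_self {d : ℕ} (hd : 0 < d) : neck d d = 1 := by
  haveI : NeZero d := ⟨hd.ne'⟩
  have hcard : Fintype.card (ZMod d) = d := ZMod.card d
  haveI : Subsingleton {S : Finset (ZMod d) // S.card = d} :=
    ⟨fun S T => Subtype.ext (by
      rw [Finset.eq_univ_of_card _ (S.2.trans hcard.symm),
        Finset.eq_univ_of_card _ (T.2.trans hcard.symm)])⟩
  haveI : Nonempty {S : Finset (ZMod d) // S.card = d} :=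
    ⟨⟨Finset.univ, by rw [Finset.card_univ, hcard]⟩⟩
  haveI : Subsingleton (Quot (neckRel d d)) :=
    ⟨fun a b => by
      induction a using Quot.ind with
      | _ S =>
      induction b using Quot.ind with
      | _ T => exact congrArg _ (Subsingleton.elim _ _)⟩
  rw [neck, Nat.card_eq_one_iff_unique]
  exact ⟨inferInstance, Nonempty.map (Quot.mk _) inferInstance⟩

theorem stmt6 (d : ℕ) (hd : 0 < d) (P : Polynomial ℤ)
    (hP : P = ∑ j ∈ Finset.Icc 1 d, X ^ (2 * j)
        + ∑ i ∈ Finset.Icc 1 d, (neck d i : Polynomial ℤ) * X ^ (2 * (d - i))) :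
    P.natDegree = 2 * d
      ∧ (∀ m ≤ 2 * d, P.coeff m = P.coeff (2 * d - m))
      ∧ (∀ m, Odd m → P.coeff m = 0) := by
  have coeff2 : ∀ k ≤ d, P.coeff (2 * k)
      = (if 1 ≤ k then 1 else 0) + (if k < d then (neck d (d - k) : ℤ) else 0) := by
    intro k hk
    rw [hP, coeff_add, finset_sum_coeff, finset_sum_coeff]
    simp only [coeff_X_pow, ← map_natCast (C : ℤ →+* Polynomial ℤ), coeff_C_mul, mul_ite,
      mul_one, mul_zero]
    congr 1
    · by_cases h1 : 1 ≤ k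
      · rw [Finset.sum_eq_single_of_mem k (Finset.mem_Icc.mpr ⟨h1, hk⟩), if_pos rfl, if_pos h1]
        intro b _ hb
        rw [if_neg (by omega)]
      · rw [if_neg h1, Finset.sum_eq_zero]
        intro b hb
        rw [if_neg (by simp only [Finset.mem_Icc] at hb; omega)]
    · by_cases h1 : k < d
      · rw [Finset.sum_eq_single_of_mem (d - k) (Finset.mem_Icc.mpr ⟨by omega, by omega⟩),
          if_pos (by omega), if_pos h1]
        intro b hb hbk
        rw [if_neg (by simp only [Finset.mem_Icc] at hb; omega)]
      · rw [if_neg h1, Finset.sum_eq_zero]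
        intro b hb
        rw [if_neg (by simp only [Finset.mem_Icc] at hb; omega)]
  have hodd : ∀ m, Odd m → P.coeff m = 0 := by
    intro m hm
    obtain ⟨c, hc⟩ := hm
    rw [hP, coeff_add, finset_sum_coeff, finset_sum_coeff]
    simp only [coeff_X_pow, ← map_natCast (C : ℤ →+* Polynomial ℤ), coeff_C_mul, mul_ite,
      mul_one, mul_zero]
    rw [Finset.sum_eq_zero fun b _ => by rw [if_neg (by omega)],
      Finset.sum_eq_zero fun b _ => by rw [if_neg (by omega)], add_zero]
  have hle : P.natDegree ≤ 2 * d := by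
    rw [hP]
    refine le_trans (natDegree_add_le _ _) (max_le ?_ ?_)
    · refine natDegree_sum_le_of_forall_le _ _ fun j hj => ?_
      rw [natDegree_X_pow]
      simp only [Finset.mem_Icc] at hj; omega
    · refine natDegree_sum_le_of_forall_le _ _ fun i hi => ?_
      refine le_trans (natDegree_mul_le) ?_
      rw [natDegree_natCast, natDegree_X_pow]
      omega
  have h2d : P.coeff (2 * d) = 1 := by
    rw [coeff2 d le_rfl, if_pos (by omega : 1 ≤ d), if_neg (lt_irrefl d), add_zero]
  refine ⟨le_antisymm hle (le_natDegree_of_ne_zero (by rw [h2d]; norm_num)), ?_, hodd⟩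
  intro m hm
  by_cases ho : Odd m
  · rw [hodd m ho, hodd (2 * d - m) (by rw [Nat.odd_iff] at ho ⊢; omega)]
  · obtain ⟨k, rfl⟩ : ∃ k, m = 2 * k := by
      rw [Nat.not_odd_iff_even, Nat.even_iff] at ho; exact ⟨m / 2, by omega⟩
    have hk : k ≤ d := by omega
    rw [show 2 * d - 2 * k = 2 * (d - k) from by omega, coeff2 k hk, coeff2 (d - k) (by omega),
      show d - (d - k) = k from by omega]
    rcases Nat.eq_zero_or_pos k with rfl | hk1
    · rw [Nat.sub_zero, if_neg (by omega : ¬ 1 ≤ 0), if_pos (by omega : 0 < d),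
        if_pos (by omega : 1 ≤ d), if_neg (lt_irrefl d), neck_self hd]
      norm_num
    · rcases eq_or_lt_of_le hk with rfl | hkd
      · rw [Nat.sub_self, if_pos (by omega : 1 ≤ k), if_neg (lt_irrefl k),
          if_neg (by omega : ¬ 1 ≤ 0), if_pos (by omega : 0 < k), neck_self hd]
        norm_num
      · rw [if_pos (by omega : 1 ≤ k), if_pos (by omega : k < d), if_pos (by omega : 1 ≤ d - k),
          if_pos (by omega : d - k < d), neck_compl hd (le_of_lt hkd)]
end

section
/- Let d be a positive integer and 1 ≤ i ≤ d. The number of orbits of the dihedral group of order 2i, acting by precomposition with the rotations x ↦ x + a and reflections x ↦ a − x of ZMod i, on the set of functions f : ZMod i → ℕ with f(j) ≥ 1 for all j and Σ_{j ∈ ZMod i} f(j) = d, equals N(d,i). (This is the paper's bijection between the substrata Δ_d^{(d_1,...,d_i)} of the boundary stratum Δ_d^i of Q̄₁(G(1,1),d) — i.e., decorated i-gons with positive labels summing to d, up to dihedral symmetry — and necklaces of i black and d−i white beads, obtained by placing one black bead at each vertex and d_j − 1 white beads on the j-th edge.) -/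
open Polynomial

/-- The orbit relation of the dihedral group of order `2i` acting by precomposition with
rotations `x ↦ x + a` and reflections `x ↦ a - x` of `ZMod i` on functions
`f : ZMod i → ℕ` with `f j ≥ 1` for all `j` and `∑ j, f j = d` (decorated `i`-gons). -/
def polyRel (d i : ℕ) [NeZero i]
    (f g : {f : ZMod i → ℕ // (∀ j, 1 ≤ f j) ∧ ∑ j, f j = d}) : Prop :=
  ∃ a : ZMod i, (∀ x, f.1 (x + a) = g.1 x) ∨ (∀ x, f.1 (a - x) = g.1 x)


open Finset

set_option linter.unusedSectionVars false

section PSum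
variable {i : ℕ} [NeZero i] (f : ZMod i → ℕ)

def psum (n : ℕ) : ℕ := ∑ k ∈ Finset.range n, f (k : ZMod i)

lemma psum_succ (n : ℕ) : psum f (n + 1) = psum f n + f (n : ZMod i) :=
  Finset.sum_range_succ _ _

lemma psum_block {d : ℕ} (hsum : ∑ j, f j = d) (n : ℕ) :
    ∑ k ∈ Finset.range i, f ((n + k : ℕ) : ZMod i) = d := by
  rw [← hsum]
  apply Finset.sum_nbij' (i := fun k => ((n + k : ℕ) : ZMod i))
    (j := fun x => ((x - (n : ZMod i)).val))
  · intro a ha; exact Finset.mem_univ _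
  · intro x hx; exact Finset.mem_range.2 (ZMod.val_lt _)
  · intro a ha
    push_cast
    rw [add_comm, add_sub_cancel_right, ZMod.val_cast_of_lt (Finset.mem_range.1 ha)]
  · intro x hx
    push_cast
    rw [ZMod.natCast_rightInverse _, add_sub_cancel]
  · intro a ha; rfl

lemma psum_i {d : ℕ} (hsum : ∑ j, f j = d) : psum f i = d := by
  have := psum_block f hsum 0
  simpa [psum] using this

lemma psum_add_i {d : ℕ} (hsum : ∑ j, f j = d) (n : ℕ) :
    psum f (n + i) = psum f n + d := by
  rw [psum, Finset.sum_range_add, ← psum, psum_block f hsum n]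

lemma psum_strictMono (hf : ∀ j, 1 ≤ f j) : StrictMono (psum f) := by
  apply strictMono_nat_of_lt_succ
  intro n
  rw [psum_succ]
  have := hf (n : ZMod i)
  omega

lemma cast_psum_mod {d : ℕ} (hsum : ∑ j, f j = d) (n : ℕ) :
    ((psum f n : ℕ) : ZMod d) = ((psum f (n % i) : ℕ) : ZMod d) := by
  induction n using Nat.strong_induction_on with
  | _ n ih =>
    rcases lt_or_ge n i with h | h
    · rw [Nat.mod_eq_of_lt h]
    · obtain ⟨m, rfl⟩ : ∃ m, n = m + i := ⟨n - i, by omega⟩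
      rw [psum_add_i f hsum]
      have hi : 0 < i := Nat.pos_of_ne_zero (NeZero.ne i)
      rw [Nat.add_mod_right]
      push_cast
      rw [ZMod.natCast_self, add_zero]
      exact ih m (by omega)

lemma psum_lt (hf : ∀ j, 1 ≤ f j) {d : ℕ} (hsum : ∑ j, f j = d) {j : ℕ} (hj : j < i) :
    psum f j < d := by
  rw [← psum_i f hsum]
  exact psum_strictMono f hf hj

end PSum

section NSet
variable {d i : ℕ} [NeZero i] [NeZero d]

/-- The necklace associated to a decorated polygon. -/
def nset (f : ZMod i → ℕ) : Finset (ZMod d) :=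
  (Finset.range i).image fun j => ((psum f j : ℕ) : ZMod d)

variable {f : ZMod i → ℕ} (hf : ∀ j, 1 ≤ f j) (hsum : ∑ j, f j = d)

include hf hsum

lemma val_cast_psum {j : ℕ} (hj : j < i) :
    (((psum f j : ℕ) : ZMod d)).val = psum f j :=
  ZMod.val_cast_of_lt (psum_lt f hf hsum hj)

lemma nset_injOn : Set.InjOn (fun j => ((psum f j : ℕ) : ZMod d)) (Finset.range i) := by
  intro a ha b hb hab
  simp only [Finset.coe_range, Set.mem_Iio] at ha hb
  have := congrArg ZMod.val hab
  rw [val_cast_psum hf hsum ha, val_cast_psum hf hsum hb] at this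
  exact (psum_strictMono f hf).injective this

lemma card_nset : (nset (d := d) f).card = i := by
  rw [nset, Finset.card_image_of_injOn (nset_injOn hf hsum), Finset.card_range]

end NSet

section NSet2
variable {d i : ℕ} [NeZero i] [NeZero d]
variable {f g : ZMod i → ℕ} (hf : ∀ j, 1 ≤ f j) (hsum : ∑ j, f j = d)
  (hg : ∀ j, 1 ≤ g j) (hgsum : ∑ j, g j = d)

include hf hsum in
lemma nset_val_image :
    (nset (d := d) f).image ZMod.val = (Finset.range i).image (psum f) := by
  rw [nset, Finset.image_image]
  apply Finset.image_congr
  intro j hj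
  exact val_cast_psum hf hsum (Finset.mem_range.1 hj)

include hf hsum hg hgsum in
lemma psum_eq_of_nset_eq (h : nset (d := d) f = nset (d := d) g) :
    ∀ j ≤ i, psum f j = psum g j := by
  have himg : (Finset.range i).image (psum f) = (Finset.range i).image (psum g) := by
    rw [← nset_val_image hf hsum, ← nset_val_image hg hgsum, h]
  have hcard : ((Finset.range i).image (psum f)).card = i := by
    rw [Finset.card_image_of_injOn ((psum_strictMono f hf).injective.injOn),
      Finset.card_range]
  have h1 : (fun j : Fin i => psum f j) =
      ((Finset.range i).image (psum f)).orderEmbOfFin hcard := by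
    apply Finset.orderEmbOfFin_unique
    · intro x
      exact Finset.mem_image_of_mem _ (Finset.mem_range.2 x.2)
    · exact fun a b hab => psum_strictMono f hf hab
  have h2 : (fun j : Fin i => psum g j) =
      ((Finset.range i).image (psum f)).orderEmbOfFin hcard := by
    apply Finset.orderEmbOfFin_unique
    · intro x
      rw [himg]
      exact Finset.mem_image_of_mem _ (Finset.mem_range.2 x.2)
    · exact fun a b hab => psum_strictMono g hg hab
  intro j hj
  rcases Nat.lt_or_ge j i with hlt | hge
  · exact (congrFun (h1.trans h2.symm) ⟨j, hlt⟩ :)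
  · have : j = i := le_antisymm hj hge
    rw [this, psum_i f hsum, psum_i g hgsum]

include hf hsum hg hgsum in
lemma eq_of_nset_eq (h : nset (d := d) f = nset (d := d) g) : f = g := by
  have key := psum_eq_of_nset_eq hf hsum hg hgsum h
  funext x
  have hx : x = ((x.val : ℕ) : ZMod i) := (ZMod.natCast_rightInverse x).symm
  have hv : x.val < i := ZMod.val_lt x
  rw [hx]
  have e1 := psum_succ f x.val
  have e2 := psum_succ g x.val
  have k1 := key x.val (le_of_lt hv)
  have k2 := key (x.val + 1) hv
  omega

end NSet2

section Equivariance
variable {d i : ℕ} [NeZero i] [NeZero d]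
variable {f : ZMod i → ℕ} (hf : ∀ j, 1 ≤ f j) (hsum : ∑ j, f j = d)


lemma mod_inj_interval {i x y : ℕ} (hxy : x ≤ y) (h : y - x < i) (hm : x % i = y % i) :
    x = y := by
  obtain ⟨k, hk⟩ := (Nat.modEq_iff_dvd' hxy).mp hm
  rcases Nat.eq_zero_or_pos k with rfl | hkpos
  · omega
  · have : i ≤ i * k := Nat.le_mul_of_pos_right i hkpos
    omega

lemma image_mod_range {t : ℕ} (hi : 0 < i) :
    (Finset.range i).image (fun j => (t + j) % i) = Finset.range i := by
  apply Finset.eq_of_subset_of_card_le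
  · intro x hx
    simp only [Finset.mem_image, Finset.mem_range] at hx ⊢
    obtain ⟨j, _, rfl⟩ := hx
    exact Nat.mod_lt _ hi
  · rw [Finset.card_image_of_injOn, Finset.card_range]
    intro a ha b hb hab
    simp only [Finset.coe_range, Set.mem_Iio] at ha hb
    have hab' : (t + a) % i = (t + b) % i := hab
    rcases le_total a b with h | h
    · have := mod_inj_interval (Nat.add_le_add_left h t) (by omega) hab'
      omega
    · have := mod_inj_interval (Nat.add_le_add_left h t) (by omega) hab'.symm
      omega

lemma image_mod_range' {c : ℕ} (hi : 0 < i) :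
    (Finset.range i).image (fun j => (c + i + 1 - j) % i) = Finset.range i := by
  apply Finset.eq_of_subset_of_card_le
  · intro x hx
    simp only [Finset.mem_image, Finset.mem_range] at hx ⊢
    obtain ⟨j, _, rfl⟩ := hx
    exact Nat.mod_lt _ hi
  · rw [Finset.card_image_of_injOn, Finset.card_range]
    intro a ha b hb hab
    simp only [Finset.coe_range, Set.mem_Iio] at ha hb
    have hab' : (c + i + 1 - a) % i = (c + i + 1 - b) % i := hab
    rcases le_total a b with h | h
    · have := mod_inj_interval (by omega : c + i + 1 - b ≤ c + i + 1 - a) (by omega) hab'.symm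
      omega
    · have := mod_inj_interval (by omega : c + i + 1 - a ≤ c + i + 1 - b) (by omega) hab'
      omega

include hsum in
lemma psum_rot (a : ZMod i) (j : ℕ) :
    psum f (a.val + j) = psum f a.val + psum (fun x => f (x + a)) j := by
  simp only [psum]
  rw [Finset.sum_range_add]
  congr 1
  apply Finset.sum_congr rfl
  intro k _
  congr 1
  push_cast
  rw [ZMod.natCast_rightInverse a, add_comm]

include hsum in
lemma psum_refl (a : ZMod i) {j : ℕ} (hj : j ≤ i) :
    psum f (a.val + i + 1) = psum f (a.val + i + 1 - j) + psum (fun x => f (a - x)) j := by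
  set c := a.val with hc
  have hb : (c + i + 1 - j) + j = c + i + 1 := by omega
  conv_lhs => rw [← hb]
  simp only [psum]
  rw [Finset.sum_range_add]
  congr 1
  rw [← Finset.sum_range_reflect (fun k => f (a - (k : ZMod i))) j]
  apply Finset.sum_congr rfl
  intro k hk
  have hk' : k < j := Finset.mem_range.1 hk
  congr 1
  have h3 : ((c + i + 1 - j + k : ℕ) : ZMod i) + ((j - 1 - k : ℕ) : ZMod i)
      = ((c + i : ℕ) : ZMod i) := by
    rw [← Nat.cast_add, show (c + i + 1 - j + k) + (j - 1 - k) = c + i by omega]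
  have h4 : ((c + i : ℕ) : ZMod i) = a := by
    push_cast
    rw [ZMod.natCast_self, add_zero, hc, ZMod.natCast_rightInverse a]
  rw [h4] at h3
  linear_combination h3

include hf hsum in
lemma nset_rot (a : ZMod i) :
    (nset (d := d) f).image (fun x => x + (-((psum f a.val : ℕ) : ZMod d))) =
      nset (d := d) (fun x => f (x + a)) := by
  have hi : 0 < i := Nat.pos_of_ne_zero (NeZero.ne i)
  set t := a.val with ht
  set C : ZMod d := ((psum f t : ℕ) : ZMod d) with hC
  have key : ∀ j : ℕ, ((psum (fun x => f (x + a)) j : ℕ) : ZMod d) =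
      ((psum f ((t + j) % i) : ℕ) : ZMod d) - C := by
    intro j
    have := congrArg (fun n : ℕ => ((n : ℕ) : ZMod d)) (psum_rot hsum a j)
    simp only [Nat.cast_add] at this
    rw [cast_psum_mod f hsum (t + j)] at this
    rw [hC]
    linear_combination -this
  symm
  calc nset (d := d) (fun x => f (x + a))
      = (Finset.range i).image (fun j => ((psum f ((t + j) % i) : ℕ) : ZMod d) - C) :=
        Finset.image_congr fun j _ => key j
    _ = ((Finset.range i).image (fun j => (t + j) % i)).image
          (fun m => ((psum f m : ℕ) : ZMod d) - C) := by
        rw [Finset.image_image]; rfl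
    _ = (Finset.range i).image (fun m => ((psum f m : ℕ) : ZMod d) - C) := by
        rw [image_mod_range hi]
    _ = (nset (d := d) f).image (fun x => x + (-C)) := by
        rw [nset, Finset.image_image]
        apply Finset.image_congr
        intro j _
        simp [sub_eq_add_neg]

include hf hsum in
lemma nset_refl (a : ZMod i) :
    (nset (d := d) f).image
      (fun x => ((psum f ((a.val + 1) % i) : ℕ) : ZMod d) - x) =
      nset (d := d) (fun x => f (a - x)) := by
  have hi : 0 < i := Nat.pos_of_ne_zero (NeZero.ne i)
  set c := a.val with hc
  set A : ZMod d := ((psum f ((c + 1) % i) : ℕ) : ZMod d) with hA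
  have key : ∀ j : ℕ, j ≤ i → ((psum (fun x => f (a - x)) j : ℕ) : ZMod d) =
      A - ((psum f ((c + i + 1 - j) % i) : ℕ) : ZMod d) := by
    intro j hj
    have := congrArg (fun n : ℕ => ((n : ℕ) : ZMod d)) (psum_refl hsum a hj)
    simp only [Nat.cast_add] at this
    rw [cast_psum_mod f hsum (c + i + 1), cast_psum_mod f hsum (c + i + 1 - j)] at this
    have hmod : (c + i + 1) % i = (c + 1) % i := by
      rw [show c + i + 1 = (c + 1) + i by omega, Nat.add_mod_right]
    rw [hmod] at this
    rw [hA]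
    linear_combination -this
  symm
  calc nset (d := d) (fun x => f (a - x))
      = (Finset.range i).image
          (fun j => A - ((psum f ((c + i + 1 - j) % i) : ℕ) : ZMod d)) :=
        Finset.image_congr fun j hj => key j (le_of_lt (Finset.mem_range.1 hj))
    _ = ((Finset.range i).image (fun j => (c + i + 1 - j) % i)).image
          (fun m => A - ((psum f m : ℕ) : ZMod d)) := by
        rw [Finset.image_image]; rfl
    _ = (Finset.range i).image (fun m => A - ((psum f m : ℕ) : ZMod d)) := by
        rw [image_mod_range' hi]
    _ = (nset (d := d) f).image (fun x => A - x) := by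
        rw [nset, Finset.image_image]; rfl

end Equivariance

section Validity
variable {d i : ℕ} [NeZero i]

lemma sum_rot (f : ZMod i → ℕ) (a : ZMod i) : ∑ x, f (x + a) = ∑ x, f x :=
  Fintype.sum_equiv (Equiv.addRight a) _ _ (fun _ => rfl)

lemma sum_refl (f : ZMod i → ℕ) (a : ZMod i) : ∑ x, f (a - x) = ∑ x, f x :=
  Fintype.sum_equiv (Equiv.subLeft a) _ _ (fun _ => rfl)

end Validity

lemma neckRel_equivalence (d i : ℕ) : Equivalence (neckRel d i) := by
  constructor
  · intro S
    exact ⟨0, Or.inl (by simp)⟩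
  · rintro S T ⟨a, h | h⟩
    · refine ⟨-a, Or.inl ?_⟩
      rw [← h, Finset.image_image]
      simp [Function.comp_def]
    · refine ⟨a, Or.inr ?_⟩
      rw [← h, Finset.image_image]
      simp [Function.comp_def]
  · rintro S T U ⟨a, ha | ha⟩ ⟨b, hb | hb⟩
    · refine ⟨a + b, Or.inl ?_⟩
      rw [← hb, ← ha, Finset.image_image]
      exact Finset.image_congr fun x _ => (add_assoc x a b).symm
    · refine ⟨b - a, Or.inr ?_⟩
      rw [← hb, ← ha, Finset.image_image]
      exact Finset.image_congr fun x _ => by simp only [Function.comp_apply]; ring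
    · refine ⟨a + b, Or.inr ?_⟩
      rw [← hb, ← ha, Finset.image_image]
      exact Finset.image_congr fun x _ => by simp only [Function.comp_apply]; ring
    · refine ⟨b - a, Or.inl ?_⟩
      rw [← hb, ← ha, Finset.image_image]
      exact Finset.image_congr fun x _ => by simp only [Function.comp_apply]; ring

section Surj
variable {d i : ℕ} [NeZero i] [NeZero d]

lemma sum_range_cast (f : ZMod i → ℕ) :
    ∑ k ∈ Finset.range i, f (k : ZMod i) = ∑ x, f x := by
  apply Finset.sum_nbij' (i := fun k => ((k : ℕ) : ZMod i)) (j := fun x => x.val)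
  · intro a _; exact Finset.mem_univ _
  · intro x _; exact Finset.mem_range.2 (ZMod.val_lt _)
  · intro a ha; exact ZMod.val_cast_of_lt (Finset.mem_range.1 ha)
  · intro x _; exact ZMod.natCast_rightInverse x
  · intro a _; rfl

lemma exists_nset_eq (hi : i ≤ d) {S : Finset (ZMod d)} (hcard : S.card = i)
    (h0 : (0 : ZMod d) ∈ S) :
    ∃ g : ZMod i → ℕ, (∀ j, 1 ≤ g j) ∧ (∑ j, g j = d) ∧ nset (d := d) g = S := by
  have hipos : 0 < i := Nat.pos_of_ne_zero (NeZero.ne i)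
  set N : Finset ℕ := S.image ZMod.val with hNdef
  have hN : N.card = i := by
    rw [hNdef, Finset.card_image_of_injective _ (ZMod.val_injective d), hcard]
  set u : ℕ → ℕ := fun j => if h : j < i then N.orderEmbOfFin hN ⟨j, h⟩ else d with hu
  have hu_mem : ∀ {j : ℕ}, j < i → u j ∈ N := by
    intro j h
    simp only [hu, dif_pos h]
    exact Finset.orderEmbOfFin_mem _ _ _
  have hu_lt_d : ∀ {j : ℕ}, j < i → u j < d := by
    intro j h
    obtain ⟨x, _, hx⟩ := Finset.mem_image.1 (hu_mem h)
    rw [← hx]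
    exact ZMod.val_lt x
  have hu_i : u i = d := by simp [hu]
  have hu_strict : ∀ {j k : ℕ}, j < k → k ≤ i → u j < u k := by
    intro j k hjk hk
    rcases lt_or_eq_of_le hk with h | rfl
    · have hj : j < i := lt_trans hjk h
      simp only [hu, dif_pos h, dif_pos hj]
      exact (N.orderEmbOfFin hN).strictMono (by exact hjk)
    · rw [hu_i]
      exact hu_lt_d (lt_of_lt_of_le hjk le_rfl)
  have hu_le : ∀ j, u j ≤ d := by
    intro j
    by_cases h : j < i
    · exact le_of_lt (hu_lt_d h)
    · simp [hu, h]
  have hu_mono : Monotone u := by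
    intro a b hab
    rcases lt_or_eq_of_le hab with h | rfl
    · rcases Nat.le_total b i with hb | hb
      · exact le_of_lt (hu_strict h hb)
      · have : u b = d := by simp [hu, show ¬ b < i by omega]
        rw [this]; exact hu_le a
    · rfl
  have hu0 : u 0 = 0 := by
    have hmem : (0 : ℕ) ∈ N := Finset.mem_image.2 ⟨0, h0, ZMod.val_zero⟩
    have : u 0 ≤ 0 := by
      have h := Finset.orderEmbOfFin_zero hN hipos
      simp only [hu, dif_pos hipos]
      rw [h]
      exact Finset.min'_le _ _ hmem
    omega
  refine ⟨fun x => u (x.val + 1) - u x.val, ?_, ?_, ?_⟩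
  · intro x
    show 1 ≤ u (x.val + 1) - u x.val
    have := hu_strict (Nat.lt_add_one x.val) (ZMod.val_lt x)
    omega
  · rw [← sum_range_cast]
    have : ∀ k ∈ Finset.range i,
        u (((k : ℕ) : ZMod i).val + 1) - u ((k : ℕ) : ZMod i).val = u (k + 1) - u k := by
      intro k hk
      rw [ZMod.val_cast_of_lt (Finset.mem_range.1 hk)]
    rw [Finset.sum_congr rfl this, Finset.sum_range_tsub hu_mono, hu0, hu_i]
    omega
  · set g : ZMod i → ℕ := fun x => u (x.val + 1) - u x.val with hgdef
    have hpg : ∀ j ≤ i, psum g j = u j := by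
      intro j hj
      induction j with
      | zero => simp [psum, hu0]
      | succ k ih =>
        have hk : k < i := hj
        rw [psum_succ, ih (le_of_lt hk), hgdef]
        simp only [ZMod.val_cast_of_lt hk]
        have := hu_mono (Nat.le_add_right k 1)
        omega
    have himgu : (Finset.range i).image u = N := by
      apply Finset.eq_of_subset_of_card_le
      · intro x hx
        obtain ⟨j, hj, rfl⟩ := Finset.mem_image.1 hx
        exact hu_mem (Finset.mem_range.1 hj)
      · rw [hN, Finset.card_image_of_injOn, Finset.card_range]
        intro a ha b hb hab
        simp only [Finset.coe_range, Set.mem_Iio] at ha hb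
        by_contra hne
        rcases Nat.lt_or_ge a b with h | h
        · exact absurd hab (ne_of_lt (hu_strict h (le_of_lt hb)))
        · have h' : b < a := by omega
          exact absurd hab.symm (ne_of_lt (hu_strict h' (le_of_lt ha)))
    rw [nset]
    calc (Finset.range i).image (fun j => ((psum g j : ℕ) : ZMod d))
        = (Finset.range i).image (fun j => ((u j : ℕ) : ZMod d)) :=
          Finset.image_congr fun j hj => by
            rw [hpg j (le_of_lt (Finset.mem_range.1 hj))]
      _ = ((Finset.range i).image u).image (fun n : ℕ => (n : ZMod d)) := by
          rw [Finset.image_image]; rfl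
      _ = N.image (fun n : ℕ => (n : ZMod d)) := by rw [himgu]
      _ = S := by
          rw [hNdef, Finset.image_image]
          have : ∀ x ∈ S, ((ZMod.val x : ℕ) : ZMod d) = x := fun x _ =>
            ZMod.natCast_rightInverse x
          calc S.image ((fun n : ℕ => (n : ZMod d)) ∘ ZMod.val)
              = S.image id := Finset.image_congr fun x hx => this x hx
            _ = S := Finset.image_id

end Surj

section Main
variable {d i : ℕ} [NeZero i] [NeZero d]

lemma zero_mem_nset (f : ZMod i → ℕ) : (0 : ZMod d) ∈ nset (d := d) f :=
  Finset.mem_image.2 ⟨0, Finset.mem_range.2 (Nat.pos_of_ne_zero (NeZero.ne i)),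
    by simp [psum]⟩

def toNeck (f : {f : ZMod i → ℕ // (∀ j, 1 ≤ f j) ∧ ∑ j, f j = d}) :
    {S : Finset (ZMod d) // S.card = i} :=
  ⟨nset f.1, card_nset f.2.1 f.2.2⟩

lemma descent (f g : {f : ZMod i → ℕ // (∀ j, 1 ≤ f j) ∧ ∑ j, f j = d})
    (h : polyRel d i f g) : neckRel d i (toNeck f) (toNeck g) := by
  obtain ⟨a, h | h⟩ := h
  · have hg : g.1 = fun x => f.1 (x + a) := funext fun x => (h x).symm
    refine ⟨-((psum f.1 a.val : ℕ) : ZMod d), Or.inl ?_⟩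
    show (nset f.1).image _ = nset g.1
    rw [hg]
    exact nset_rot f.2.1 f.2.2 a
  · have hg : g.1 = fun x => f.1 (a - x) := funext fun x => (h x).symm
    refine ⟨((psum f.1 ((a.val + 1) % i) : ℕ) : ZMod d), Or.inr ?_⟩
    show (nset f.1).image _ = nset g.1
    rw [hg]
    exact nset_refl f.2.1 f.2.2 a

lemma inj_aux (f g : {f : ZMod i → ℕ // (∀ j, 1 ≤ f j) ∧ ∑ j, f j = d})
    (h : neckRel d i (toNeck f) (toNeck g)) : polyRel d i f g := by
  obtain ⟨b, hb | hb⟩ := h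
  · replace hb : (nset f.1).image (fun x => x + b) = nset (d := d) g.1 := hb
    have h0 : (0 : ZMod d) ∈ (nset f.1).image (fun x => x + b) := by
      rw [hb]; exact zero_mem_nset g.1
    obtain ⟨x, hx, hxb⟩ := Finset.mem_image.1 h0
    rw [nset] at hx
    obtain ⟨j, hj, rfl⟩ := Finset.mem_image.1 hx
    have hj' : j < i := Finset.mem_range.1 hj
    set a : ZMod i := (j : ZMod i) with ha
    have hav : a.val = j := ZMod.val_cast_of_lt hj'
    have hbeq : -((psum f.1 j : ℕ) : ZMod d) = b := by linear_combination -hxb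
    have hrot := nset_rot (d := d) f.2.1 f.2.2 a
    rw [hav, hbeq] at hrot
    have hff : nset (d := d) (fun x => f.1 (x + a)) = nset (d := d) g.1 :=
      hrot.symm.trans hb
    have heq : (fun x => f.1 (x + a)) = g.1 :=
      eq_of_nset_eq (fun j => f.2.1 _) ((sum_rot f.1 a).trans f.2.2) g.2.1 g.2.2 hff
    exact ⟨a, Or.inl fun x => congrFun heq x⟩
  · replace hb : (nset f.1).image (fun x => b - x) = nset (d := d) g.1 := hb
    have h0 : (0 : ZMod d) ∈ (nset f.1).image (fun x => b - x) := by
      rw [hb]; exact zero_mem_nset g.1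
    obtain ⟨x, hx, hxb⟩ := Finset.mem_image.1 h0
    rw [nset] at hx
    obtain ⟨j, hj, rfl⟩ := Finset.mem_image.1 hx
    have hj' : j < i := Finset.mem_range.1 hj
    have hipos : 0 < i := Nat.pos_of_ne_zero (NeZero.ne i)
    set a : ZMod i := ((j + i - 1 : ℕ) : ZMod i) with ha
    have hval : a.val = (j + i - 1) % i := ZMod.val_natCast _ _
    have hav : (a.val + 1) % i = j := by
      rw [hval]
      rcases Nat.eq_zero_or_pos j with rfl | hjpos
      · rw [show 0 + i - 1 = i - 1 by omega, Nat.mod_eq_of_lt (show i - 1 < i by omega),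
          show i - 1 + 1 = i by omega, Nat.mod_self]
      · rw [show j + i - 1 = (j - 1) + i by omega, Nat.add_mod_right,
          Nat.mod_eq_of_lt (show j - 1 < i by omega), show j - 1 + 1 = j by omega,
          Nat.mod_eq_of_lt hj']
    have hbeq : ((psum f.1 j : ℕ) : ZMod d) = b := by linear_combination -hxb
    have hrefl := nset_refl (d := d) f.2.1 f.2.2 a
    rw [hav, hbeq] at hrefl
    have hff : nset (d := d) (fun x => f.1 (a - x)) = nset (d := d) g.1 :=
      hrefl.symm.trans hb
    have heq : (fun x => f.1 (a - x)) = g.1 :=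
      eq_of_nset_eq (fun j => f.2.1 _) ((sum_refl f.1 a).trans f.2.2) g.2.1 g.2.2 hff
    exact ⟨a, Or.inr fun x => congrFun heq x⟩

end Main

theorem stmt7 (d i : ℕ) [NeZero i] (hd : 0 < d) (h1 : 1 ≤ i) (hi : i ≤ d) :
    Nat.card (Quot (polyRel d i)) = neck d i := by
  haveI : NeZero d := ⟨hd.ne'⟩
  show Nat.card (Quot (polyRel d i)) = Nat.card (Quot (neckRel d i))
  apply Nat.card_congr
  refine Equiv.ofBijective (Quot.lift (fun f => Quot.mk _ (toNeck f))
    (fun f g h => Quot.sound (descent f g h))) ⟨?_, ?_⟩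
  · intro p q
    induction p using Quot.ind with | _ f => ?_
    induction q using Quot.ind with | _ g => ?_
    intro h
    exact Quot.sound (inj_aux f g
      (((neckRel_equivalence d i).eqvGen_iff).mp (Quot.eq.1 h)))
  · intro q
    induction q using Quot.ind with | _ S => ?_
    have hne : S.1.Nonempty := Finset.card_pos.1 (by rw [S.2]; omega)
    obtain ⟨m, hm⟩ := hne
    have hcard' : (S.1.image (fun x => x + (-m))).card = i := by
      rw [Finset.card_image_of_injective _ (add_left_injective (-m)), S.2]
    have h0 : (0 : ZMod d) ∈ S.1.image (fun x => x + (-m)) :=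
      Finset.mem_image.2 ⟨m, hm, add_neg_cancel m⟩
    obtain ⟨g, hg1, hg2, hg3⟩ := exists_nset_eq hi hcard' h0
    refine ⟨Quot.mk _ ⟨g, hg1, hg2⟩, ?_⟩
    show Quot.mk _ (toNeck ⟨g, hg1, hg2⟩) = Quot.mk _ S
    have : toNeck (d := d) ⟨g, hg1, hg2⟩ = ⟨S.1.image (fun x => x + (-m)), hcard'⟩ :=
      Subtype.ext hg3
    rw [this]
    exact (Quot.sound ⟨-m, Or.inl rfl⟩).symm
end
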